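/- arXiv:2312.17709 — 2 statements merged into one kernel-verified Lean document; each statement's English description precedes it below -/
import Mathlib

section
/- For any 3×3 complex matrix A, |perm(A)|² − |det(A)|² = Σ_{i,j=1}^{3} |A_{j i}|² ( |perm(A(¬j,¬i))|² − |det(A(¬j,¬i))|² ), where A(¬j,¬i) is the 2×2 submatrix of A obtained by deleting row j and column i. -/
open Equiv Finset

lemma perm_fin_two (A : Matrix (Fin 2) (Fin 2) ℂ) :
    A.permanent = A 0 0 * A 1 1 + A 0 1 * A 1 0 := by
  rw [Matrix.permanent, show (univ : Finset (Perm (Fin 2))) = {1, swap 0 1} from by decide]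
  rw [Finset.sum_insert (by decide), Finset.sum_singleton]
  norm_num [Fin.prod_univ_two, show (swap 0 1 : Perm (Fin 2)) 0 = 1 from rfl,
    show (swap 0 1 : Perm (Fin 2)) 1 = 0 from rfl, mul_comm]

lemma perm_fin_three (A : Matrix (Fin 3) (Fin 3) ℂ) :
    A.permanent = A 0 0 * A 1 1 * A 2 2 + A 0 0 * A 1 2 * A 2 1 + A 0 1 * A 1 0 * A 2 2
      + A 0 1 * A 1 2 * A 2 0 + A 0 2 * A 1 0 * A 2 1 + A 0 2 * A 1 1 * A 2 0 := by
  rw [Matrix.permanent, show (univ : Finset (Perm (Fin 3))) =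
    {1, swap 0 1, swap 0 2, swap 1 2, finRotate 3, (finRotate 3)⁻¹} from by decide]
  rw [Finset.sum_insert (by decide), Finset.sum_insert (by decide),
    Finset.sum_insert (by decide), Finset.sum_insert (by decide),
    Finset.sum_insert (by decide), Finset.sum_singleton]
  simp only [Fin.prod_univ_three, Equiv.Perm.one_apply,
    show (swap 0 1 : Perm (Fin 3)) 0 = 1 from rfl, show (swap 0 1 : Perm (Fin 3)) 1 = 0 from rfl,
    show (swap 0 1 : Perm (Fin 3)) 2 = 2 from rfl,
    show (swap 0 2 : Perm (Fin 3)) 0 = 2 from rfl, show (swap 0 2 : Perm (Fin 3)) 1 = 1 from rfl,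
    show (swap 0 2 : Perm (Fin 3)) 2 = 0 from rfl,
    show (swap 1 2 : Perm (Fin 3)) 0 = 0 from rfl, show (swap 1 2 : Perm (Fin 3)) 1 = 2 from rfl,
    show (swap 1 2 : Perm (Fin 3)) 2 = 1 from rfl,
    show (finRotate 3) 0 = 1 from rfl, show (finRotate 3) 1 = 2 from rfl,
    show (finRotate 3) 2 = 0 from rfl,
    show (finRotate 3)⁻¹ 0 = 2 from rfl, show (finRotate 3)⁻¹ 1 = 0 from rfl,
    show (finRotate 3)⁻¹ 2 = 1 from rfl]
  ring

theorem stmt_5 (A : Matrix (Fin 3) (Fin 3) ℂ) :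
    Complex.normSq A.permanent - Complex.normSq A.det =
      ∑ i : Fin 3, ∑ j : Fin 3,
        Complex.normSq (A j i) *
          (Complex.normSq (A.submatrix j.succAbove i.succAbove).permanent -
           Complex.normSq (A.submatrix j.succAbove i.succAbove).det) := by
  simp only [Fin.sum_univ_three, perm_fin_two, perm_fin_three, Matrix.det_fin_two,
    Matrix.det_fin_three, Matrix.submatrix_apply,
    show ((0:Fin 3).succAbove 0) = 1 from rfl, show ((0:Fin 3).succAbove 1) = 2 from rfl,
    show ((1:Fin 3).succAbove 0) = 0 from rfl, show ((1:Fin 3).succAbove 1) = 2 from rfl,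
    show ((2:Fin 3).succAbove 0) = 0 from rfl, show ((2:Fin 3).succAbove 1) = 1 from rfl]
  rw [← Complex.ofReal_inj]
  push_cast
  simp only [← Complex.mul_conj, map_add, map_sub, map_mul]
  ring
end

section
/- For any 3×3 complex matrix A: |perm(A)|² − |det(A)|² = 2·Σ_{i,j=1}^{3} |A_{ji}|²·( |perm(A(¬j,¬i))|² − perm(M(¬j,¬i)) ), where M_{kl} = |A_{kl}|² and A(¬j,¬i), M(¬j,¬i) are the submatrices with row j and column i deleted. -/
open Matrix
lemma perm2 {R : Type*} [CommRing R] (A : Matrix (Fin 2) (Fin 2) R) :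
    A.permanent = A 0 0 * A 1 1 + A 0 1 * A 1 0 := by
  rw [Matrix.permanent, show (Finset.univ : Finset (Equiv.Perm (Fin 2)))
    = {1, Equiv.swap 0 1} from by decide]
  rw [Finset.sum_insert (by decide), Finset.sum_singleton]
  simp [Fin.prod_univ_succ, Equiv.swap_apply_def]; ring

lemma perm3 {R : Type*} [CommRing R] (A : Matrix (Fin 3) (Fin 3) R) : A.permanent =
    A 0 0 * A 1 1 * A 2 2 + A 0 0 * A 1 2 * A 2 1 + A 0 1 * A 1 0 * A 2 2
    + A 0 1 * A 1 2 * A 2 0 + A 0 2 * A 1 0 * A 2 1 + A 0 2 * A 1 1 * A 2 0 := by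
  rw [Matrix.permanent, show (Finset.univ : Finset (Equiv.Perm (Fin 3)))
    = {1, Equiv.swap 0 1, Equiv.swap 0 2, Equiv.swap 1 2,
       Equiv.swap 0 1 * Equiv.swap 1 2, Equiv.swap 1 2 * Equiv.swap 0 1} from by decide]
  rw [Finset.sum_insert (by decide), Finset.sum_insert (by decide),
      Finset.sum_insert (by decide), Finset.sum_insert (by decide),
      Finset.sum_insert (by decide), Finset.sum_singleton]
  simp [Fin.prod_univ_succ, Equiv.swap_apply_def]; ring

set_option maxHeartbeats 2000000 in
theorem stmt_13 (A : Matrix (Fin 3) (Fin 3) ℂ)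
    (M : Matrix (Fin 3) (Fin 3) ℝ) (hM : ∀ k l, M k l = Complex.normSq (A k l)) :
    Complex.normSq A.permanent - Complex.normSq A.det =
      2 * ∑ i : Fin 3, ∑ j : Fin 3,
        Complex.normSq (A j i) *
          (Complex.normSq (A.submatrix j.succAbove i.succAbove).permanent -
            (M.submatrix j.succAbove i.succAbove).permanent) := by
  have s0 : (0:Fin 3).succAbove = ![1,2] := by decide
  have s1 : (1:Fin 3).succAbove = ![0,2] := by decide
  have s2 : (2:Fin 3).succAbove = ![0,1] := by decide
  simp only [Fin.sum_univ_three, perm2, perm3, Matrix.det_fin_three, Matrix.submatrix_apply,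
    hM, s0, s1, s2, Matrix.cons_val_zero, Matrix.cons_val_one, Matrix.head_cons]
  simp only [Complex.normSq_apply, Complex.mul_re, Complex.mul_im, Complex.add_re,
    Complex.add_im, Complex.sub_re, Complex.sub_im]
  ring
end
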